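/- There exists a 2-factorization of the cocktail party graph K_24 − I (the complete graph on 24 vertices minus a perfect matching) having exactly 7 triangle-factors and 4 quadrangle-factors, which moreover is Q_24-regular: identifying the vertex set with the dicyclic group Q_24 of order 24 (so that K_24 − I = Cay[Q_24 : Q_24∖{1, a^6}], where a^6 is the unique involution of Q_24), left multiplication by every element of Q_24 is an automorphism of the graph permuting the 2-factors of the factorization. In other words, HWP(24; 3, 4; 7, 4) has a sharply-vertex-transitive solution. -/

import Mathlib

/-- `H` is a 2-factor of the simple graph `G`: a spanning 2-regular subgraph of `G`
(every vertex has exactly two neighbours in `H`). -/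
def IsTwoFactor {V : Type*} (G H : SimpleGraph V) : Prop :=
  H ≤ G ∧ ∀ v : V, (H.neighborSet v).ncard = 2

/-- `H` is a 2-factor of `G` all of whose connected components are cycles of length `n`:
since `H` is 2-regular, this is equivalent to requiring that every connected component
of `H` has exactly `n` vertices. For `n = 3` this is a triangle-factor, for `n = 4` a
quadrangle-factor. -/
def IsCycleFactor {V : Type*} (G H : SimpleGraph V) (n : ℕ) : Prop :=
  IsTwoFactor G H ∧ ∀ v : V, (H.connectedComponentMk v).supp.ncard = n

/-- `F` is a solution of the Hamilton--Waterloo problem HWP on the graph `G` with `r`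
triangle-factors and `s` quadrangle-factors: the `r + s` factors `F i` are 2-factors of `G`
whose edge sets partition the edge set of `G` (every edge of `G` lies in exactly one factor),
the first `r` of them being triangle-factors and the remaining `s` quadrangle-factors. -/
def IsHWPSolution {V : Type*} (G : SimpleGraph V) (r s : ℕ)
    (F : Fin (r + s) → SimpleGraph V) : Prop :=
  (∀ i : Fin (r + s), (i : ℕ) < r → IsCycleFactor G (F i) 3) ∧
  (∀ i : Fin (r + s), r ≤ (i : ℕ) → IsCycleFactor G (F i) 4) ∧
  (∀ e : Sym2 V, e ∈ G.edgeSet → ∃! i : Fin (r + s), e ∈ (F i).edgeSet)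

/-- The Cayley graph `Cay[G : G ∖ {1, ι}]` of a group `G` with connection set the complement
of `{1, ι}`: two vertices `x, y` are adjacent iff `x ≠ y` and `x⁻¹ * y ∉ {ι, ι⁻¹}`.
When `ι` is an involution this is the complete graph on `G` minus the perfect matching
`{{x, x * ι} | x ∈ G}`, i.e. the cocktail party graph `K_|G| - I`. -/
def cocktailCayley (G : Type*) [Group G] (ι : G) : SimpleGraph G where
  Adj x y := x ≠ y ∧ x⁻¹ * y ≠ ι ∧ y⁻¹ * x ≠ ι
  symm := ⟨fun _ _ h => ⟨h.1.symm, h.2.2, h.2.1⟩⟩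
  loopless := ⟨fun _ h => h.1 rfl⟩

/-! ### Auxiliary construction -/

namespace HWP24

abbrev Q : Type := QuaternionGroup 6

/-- `a^n` -/
abbrev qa (n : ℕ) : Q := QuaternionGroup.a (n : ZMod 12)
/-- `x a^n` -/
abbrev qx (n : ℕ) : Q := QuaternionGroup.xa (n : ZMod 12)

/-- labels of the left cosets of `K = {1, a⁶, x, xa⁶}` -/
def lab : Fin 6 → Fin 6 := ![0, 1, 4, 3, 2, 5]

/-- block index: the label of the left coset of `K` containing the element. -/
def blk : Q → Fin 6
  | QuaternionGroup.a i => lab ⟨i.val % 6, Nat.mod_lt _ (by decide)⟩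
  | QuaternionGroup.xa i => lab ⟨(12 - i.val) % 6, Nat.mod_lt _ (by decide)⟩

/-- colours `1..6` -/
def tcol (b : Fin 6) : Fin 11 := ⟨1 + b.val, by omega⟩

/-- the colour of the edge `{x, x*s}`, as a function of `s` and `x`. -/
def colAux : Q → Q → Fin 11
  | QuaternionGroup.a j, x =>
    match j.val with
    | 2 => tcol (blk x)
    | 5 => tcol (blk x)
    | 10 => tcol (blk (x * qa 10))
    | 7 => tcol (blk (x * qa 7))
    | 3 => tcol (blk (x * qa 10))
    | 9 => tcol (blk (x * qa 7))
    | 1 => tcol (blk (x * qa 3))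
    | 11 => tcol (blk (x * qa 2))
    | _ => 0
  | QuaternionGroup.xa j, x =>
    match j.val with
    | 0 => 7
    | 6 => 7
    | 1 => 8
    | 7 => 8
    | 2 => 9
    | 8 => 9
    | 3 => 10
    | 9 => 10
    | 4 => tcol (blk (x * qa 3))
    | 10 => tcol (blk (x * qx 1))
    | 5 => tcol (blk (x * qa 2))
    | _ => tcol (blk (x * qx 1))

/-- the colour of the edge `{x, y}`. -/
def col (x y : Q) : Fin 11 := colAux (x⁻¹ * y) x

/-- adjacency in factor `i`. -/
abbrev fadj (i : Fin 11) (x y : Q) : Prop :=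
  x ≠ y ∧ x⁻¹ * y ≠ QuaternionGroup.a 6 ∧ y⁻¹ * x ≠ QuaternionGroup.a 6 ∧ col x y = i

/-- the successor function along the cycles of factor `i`. -/
def nf (i : Fin 11) (x : Q) : Q :=
  if h6 : 1 ≤ i.val ∧ i.val ≤ 6 then
    let b : Fin 6 := ⟨i.val - 1, by omega⟩
    if blk x = b then x * qa 2
    else if blk (x * qa 10) = b then x * qa 3
    else if blk (x * qa 7) = b then x * qa 7
    else if blk (x * qa 3) = b then x * qa 1
    else if blk (x * qa 2) = b then x * qx 5
    else x * qx 10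
  else if i.val = 0 then x * qa 4
  else x * qx (i.val - 7)

/-- representatives of the six blocks. -/
def rep (b : Fin 6) : Q := qa (lab b).val

/-- the permutation of the colours induced by left multiplication by `g`. -/
def σf (g : Q) (c : Fin 11) : Fin 11 :=
  if h : 1 ≤ c.val ∧ c.val ≤ 6 then tcol (blk (g * rep ⟨c.val - 1, by omega⟩)) else c

/-! ### Facts verified by `decide` -/

lemma col_symm : ∀ x y : Q, x ≠ y → x⁻¹ * y ≠ QuaternionGroup.a 6 → col x y = col y x := by
  decide

lemma hadjL : ∀ (i : Fin 11) (v : Q), fadj i v (nf i v) := by decide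

lemma h3L : ∀ i : Fin 11, (i : ℕ) < 7 → ∀ v : Q, nf i (nf i (nf i v)) = v := by decide

lemma h4L : ∀ i : Fin 11, 7 ≤ (i : ℕ) → ∀ v : Q, nf i (nf i (nf i (nf i v))) = v := by decide

lemma hne2L : ∀ i : Fin 11, 7 ≤ (i : ℕ) → ∀ v : Q, nf i (nf i v) ≠ v := by decide

lemma hclosedL : ∀ x y : Q, x ≠ y → x⁻¹ * y ≠ QuaternionGroup.a 6 →
    (y = nf (col x y) x ∨ x = nf (col x y) y) := by decide

lemma key : ∀ g d : Q, blk (g * d) = blk (g * rep (blk d)) := by decide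

lemma σf_tcol : ∀ (g : Q) (b : Fin 6), σf g (tcol b) = tcol (blk (g * rep b)) := by decide

lemma σf_inv : ∀ (g : Q) (c : Fin 11), σf g⁻¹ (σf g c) = c := by decide

/-! ### Equation lemmas for `colAux` -/

lemma colAux_a1 (x : Q) : colAux (qa 1) x = tcol (blk (x * qa 3)) := rfl
lemma colAux_a2 (x : Q) : colAux (qa 2) x = tcol (blk x) := rfl
lemma colAux_a3 (x : Q) : colAux (qa 3) x = tcol (blk (x * qa 10)) := rfl
lemma colAux_a5 (x : Q) : colAux (qa 5) x = tcol (blk x) := rfl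
lemma colAux_a7 (x : Q) : colAux (qa 7) x = tcol (blk (x * qa 7)) := rfl
lemma colAux_a9 (x : Q) : colAux (qa 9) x = tcol (blk (x * qa 7)) := rfl
lemma colAux_a10 (x : Q) : colAux (qa 10) x = tcol (blk (x * qa 10)) := rfl
lemma colAux_a11 (x : Q) : colAux (qa 11) x = tcol (blk (x * qa 2)) := rfl
lemma colAux_x4 (x : Q) : colAux (qx 4) x = tcol (blk (x * qa 3)) := rfl
lemma colAux_x5 (x : Q) : colAux (qx 5) x = tcol (blk (x * qa 2)) := rfl
lemma colAux_x10 (x : Q) : colAux (qx 10) x = tcol (blk (x * qx 1)) := rfl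
lemma colAux_x11 (x : Q) : colAux (qx 11) x = tcol (blk (x * qx 1)) := rfl

/-- the key invariance property of the colouring. -/
lemma colAux_mul : ∀ s : Q, s ≠ qa 0 → s ≠ qa 6 → ∀ g x : Q,
    colAux s (g * x) = σf g (colAux s x) := by
  have trans : ∀ (g x : Q) (t : Q) , tcol (blk (g * x * t)) = σf g (tcol (blk (x * t))) := by
    intro g x t
    rw [mul_assoc, key g (x * t), σf_tcol]
  intro s hs0 hs6 g x
  cases s with
  | a i =>
    fin_cases i
    · exact absurd rfl hs0
    · show colAux (qa 1) (g * x) = σf g (colAux (qa 1) x)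
      rw [colAux_a1, colAux_a1]; exact trans g x _
    · show colAux (qa 2) (g * x) = σf g (colAux (qa 2) x)
      rw [colAux_a2, colAux_a2]
      have := trans g x 1
      rwa [mul_one, mul_one] at this
    · show colAux (qa 3) (g * x) = σf g (colAux (qa 3) x)
      rw [colAux_a3, colAux_a3]; exact trans g x _
    · show colAux (qa 4) (g * x) = σf g (colAux (qa 4) x)
      rfl
    · show colAux (qa 5) (g * x) = σf g (colAux (qa 5) x)
      rw [colAux_a5, colAux_a5]
      have := trans g x 1
      rwa [mul_one, mul_one] at this
    · exact absurd rfl hs6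
    · show colAux (qa 7) (g * x) = σf g (colAux (qa 7) x)
      rw [colAux_a7, colAux_a7]; exact trans g x _
    · show colAux (qa 8) (g * x) = σf g (colAux (qa 8) x)
      rfl
    · show colAux (qa 9) (g * x) = σf g (colAux (qa 9) x)
      rw [colAux_a9, colAux_a9]; exact trans g x _
    · show colAux (qa 10) (g * x) = σf g (colAux (qa 10) x)
      rw [colAux_a10, colAux_a10]; exact trans g x _
    · show colAux (qa 11) (g * x) = σf g (colAux (qa 11) x)
      rw [colAux_a11, colAux_a11]; exact trans g x _
  | xa i =>
    fin_cases i
    · show colAux (qx 0) (g * x) = σf g (colAux (qx 0) x); rfl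
    · show colAux (qx 1) (g * x) = σf g (colAux (qx 1) x); rfl
    · show colAux (qx 2) (g * x) = σf g (colAux (qx 2) x); rfl
    · show colAux (qx 3) (g * x) = σf g (colAux (qx 3) x); rfl
    · show colAux (qx 4) (g * x) = σf g (colAux (qx 4) x)
      rw [colAux_x4, colAux_x4]; exact trans g x _
    · show colAux (qx 5) (g * x) = σf g (colAux (qx 5) x)
      rw [colAux_x5, colAux_x5]; exact trans g x _
    · show colAux (qx 6) (g * x) = σf g (colAux (qx 6) x); rfl
    · show colAux (qx 7) (g * x) = σf g (colAux (qx 7) x); rfl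
    · show colAux (qx 8) (g * x) = σf g (colAux (qx 8) x); rfl
    · show colAux (qx 9) (g * x) = σf g (colAux (qx 9) x); rfl
    · show colAux (qx 10) (g * x) = σf g (colAux (qx 10) x)
      rw [colAux_x10, colAux_x10]; exact trans g x _
    · show colAux (qx 11) (g * x) = σf g (colAux (qx 11) x)
      rw [colAux_x11, colAux_x11]; exact trans g x _

lemma col_mul (g x y : Q) (h1 : x ≠ y) (h2 : x⁻¹ * y ≠ QuaternionGroup.a 6) :
    col (g * x) (g * y) = σf g (col x y) := by
  have e : (g * x)⁻¹ * (g * y) = x⁻¹ * y := by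
    rw [mul_inv_rev, mul_assoc, inv_mul_cancel_left]
  have h0 : x⁻¹ * y ≠ qa 0 := by
    intro h
    apply h1
    have h1' : x⁻¹ * y = 1 := by rw [h]; exact (QuaternionGroup.one_def).symm
    exact (inv_mul_eq_one.mp h1')
  show colAux ((g * x)⁻¹ * (g * y)) (g * x) = σf g (colAux (x⁻¹ * y) x)
  rw [e]
  exact colAux_mul _ h0 h2 g x

/-! ### The factors -/

/-- the eleven 2-factors. -/
def Fct (i : Fin 11) : SimpleGraph Q where
  Adj x y := fadj i x y
  symm := by
    refine ⟨?_⟩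
    intro x y h
    obtain ⟨h1, h2, h3, h4⟩ := h
    exact ⟨h1.symm, h3, h2, by rw [← col_symm x y h1 h2]; exact h4⟩
  loopless := ⟨fun x h => h.1 rfl⟩

lemma Fct_adj (i : Fin 11) (x y : Q) : (Fct i).Adj x y ↔ fadj i x y := Iff.rfl

/-! ### Generic lemmas about unions of cycles -/

section cyc

variable {V : Type*} [Fintype V] (H : SimpleGraph V) (n : V → V)

omit [Fintype V] in
lemma walk_closed {S : Set V}
    (hS : ∀ x ∈ S, ∀ y, H.Adj x y → y ∈ S) :
    ∀ {x u : V}, H.Walk x u → x ∈ S → u ∈ S := by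
  intro x u w
  induction w with
  | nil => exact id
  | cons h p ih => exact fun hx => ih (hS _ hx _ h)

omit [Fintype V] in
lemma cycle3_fact
    (hadj : ∀ v, H.Adj v (n v))
    (h3 : ∀ v, n (n (n v)) = v)
    (hcl : ∀ x y, H.Adj x y → y = n x ∨ x = n y) :
    (∀ v, (H.neighborSet v).ncard = 2) ∧
      (∀ v, (H.connectedComponentMk v).supp.ncard = 3) := by
  have hcl' : ∀ x y, H.Adj x y → y = n x ∨ y = n (n x) := by
    intro x y h
    rcases hcl x y h with h' | h'
    · exact Or.inl h'
    · right; rw [h', h3]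
  have nbhd : ∀ v, H.neighborSet v = {n v, n (n v)} := by
    intro v
    ext y
    simp only [SimpleGraph.mem_neighborSet, Set.mem_insert_iff, Set.mem_singleton_iff]
    constructor
    · exact hcl' v y
    · rintro (rfl | rfl)
      · exact hadj v
      · have h := hadj (n (n v)); rw [h3] at h; exact h.symm
  constructor
  · intro v
    rw [nbhd v]
    exact Set.ncard_pair (hadj (n v)).ne
  · intro v
    have hsupp : (H.connectedComponentMk v).supp = {v, n v, n (n v)} := by
      ext u
      rw [SimpleGraph.ConnectedComponent.mem_supp_iff, SimpleGraph.ConnectedComponent.eq]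
      constructor
      · intro hr
        refine hr.symm.elim fun w => walk_closed H ?_ w (Set.mem_insert _ _)
        intro x hx y hxy
        simp only [Set.mem_insert_iff, Set.mem_singleton_iff] at hx ⊢
        rcases hcl' _ _ hxy with rfl | rfl <;>
          rcases hx with rfl | rfl | rfl <;> simp [h3]
      · intro hu
        simp only [Set.mem_insert_iff, Set.mem_singleton_iff] at hu
        rcases hu with rfl | rfl | rfl
        · exact SimpleGraph.Reachable.refl _
        · exact (hadj v).reachable.symm
        · exact ((hadj v).reachable.trans (hadj (n v)).reachable).symm
    rw [hsupp]
    refine Set.ncard_eq_three.mpr ⟨v, n v, n (n v), (hadj v).ne, ?_, (hadj (n v)).ne, rfl⟩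
    intro h
    have h2 := congrArg n h
    rw [h3] at h2
    exact (hadj v).ne h2.symm

lemma cycle4_fact
    (hadj : ∀ v, H.Adj v (n v))
    (h4 : ∀ v, n (n (n (n v))) = v)
    (hne2 : ∀ v, n (n v) ≠ v)
    (hcl : ∀ x y, H.Adj x y → y = n x ∨ x = n y) :
    (∀ v, (H.neighborSet v).ncard = 2) ∧
      (∀ v, (H.connectedComponentMk v).supp.ncard = 4) := by
  have hcl' : ∀ x y, H.Adj x y → y = n x ∨ y = n (n (n x)) := by
    intro x y h
    rcases hcl x y h with h' | h'
    · exact Or.inl h'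
    · right; rw [h', h4]
  have hd3 : ∀ v, v ≠ n (n (n v)) := by
    intro v h
    have h2 := congrArg n h
    rw [h4] at h2
    exact (hadj v).ne h2.symm
  have nbhd : ∀ v, H.neighborSet v = {n v, n (n (n v))} := by
    intro v
    ext y
    simp only [SimpleGraph.mem_neighborSet, Set.mem_insert_iff, Set.mem_singleton_iff]
    constructor
    · exact hcl' v y
    · rintro (rfl | rfl)
      · exact hadj v
      · have h := hadj (n (n (n v))); rw [h4] at h; exact h.symm
  constructor
  · intro v
    rw [nbhd v]
    refine Set.ncard_pair ?_
    intro h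
    have h2 := congrArg n h
    rw [h4] at h2
    exact hne2 v h2
  · intro v
    have hsupp : (H.connectedComponentMk v).supp = {v, n v, n (n v), n (n (n v))} := by
      ext u
      rw [SimpleGraph.ConnectedComponent.mem_supp_iff, SimpleGraph.ConnectedComponent.eq]
      constructor
      · intro hr
        refine hr.symm.elim fun w => walk_closed H ?_ w (Set.mem_insert _ _)
        intro x hx y hxy
        simp only [Set.mem_insert_iff, Set.mem_singleton_iff] at hx ⊢
        rcases hcl' _ _ hxy with rfl | rfl <;>
          rcases hx with rfl | rfl | rfl | rfl <;> simp [h4]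
      · intro hu
        simp only [Set.mem_insert_iff, Set.mem_singleton_iff] at hu
        rcases hu with rfl | rfl | rfl | rfl
        · exact SimpleGraph.Reachable.refl _
        · exact (hadj v).reachable.symm
        · exact ((hadj v).reachable.trans (hadj (n v)).reachable).symm
        · exact (((hadj v).reachable.trans (hadj (n v)).reachable).trans
            (hadj (n (n v))).reachable).symm
    rw [hsupp]
    have d1 : v ≠ n v := (hadj v).ne
    have d2 : v ≠ n (n v) := fun h => hne2 v h.symm
    have d3 : v ≠ n (n (n v)) := hd3 v
    have d4 : n v ≠ n (n v) := (hadj (n v)).ne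
    have d5 : n v ≠ n (n (n v)) := fun h => hne2 (n v) h.symm
    have d6 : n (n v) ≠ n (n (n v)) := (hadj (n (n v))).ne
    rw [Set.ncard_insert_of_notMem (by simp [d1, d2, d3]),
      Set.ncard_insert_of_notMem (by simp [d4, d5]),
      Set.ncard_pair d6]

end cyc

end HWP24

open HWP24 in
/-- HWP(24; 3, 4; 7, 4) has a sharply-vertex-transitive solution: there is a 2-factorization
of the cocktail party graph `K_24 - I = Cay[Q_24 : Q_24 ∖ {1, a^6}]` on the dicyclic group
`Q_24` of order 24 (here `QuaternionGroup 6`, whose unique involution is `a^6`) with exactly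
7 triangle-factors and 4 quadrangle-factors, such that left multiplication by every element
of `Q_24` permutes the 2-factors. -/
theorem hwp24_dicyclic_regular_7_4 :
    ∃ F : Fin (7 + 4) → SimpleGraph (QuaternionGroup 6),
      IsHWPSolution (cocktailCayley (QuaternionGroup 6) (QuaternionGroup.a 6)) 7 4 F ∧
      ∀ g : QuaternionGroup 6, ∃ σ : Equiv.Perm (Fin (7 + 4)),
        ∀ i : Fin (7 + 4),
          (F i).map (Equiv.mulLeft g).toEmbedding = F (σ i) := by
  refine ⟨Fct, ⟨?_, ?_, ?_⟩, ?_⟩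
  · -- triangle factors
    intro i hi
    have hcl : ∀ x y, (Fct i).Adj x y → y = nf i x ∨ x = nf i y := by
      intro x y h
      have h4 := h.2.2.2
      have h5 := hclosedL x y h.1 h.2.1
      rwa [h4] at h5
    obtain ⟨hdeg, hsupp⟩ := cycle3_fact (Fct i) (nf i) (hadjL i) (h3L i hi) hcl
    exact ⟨⟨fun x y h => ⟨h.1, h.2.1, h.2.2.1⟩, hdeg⟩, hsupp⟩
  · -- quadrangle factors
    intro i hi
    have hcl : ∀ x y, (Fct i).Adj x y → y = nf i x ∨ x = nf i y := by
      intro x y h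
      have h4 := h.2.2.2
      have h5 := hclosedL x y h.1 h.2.1
      rwa [h4] at h5
    obtain ⟨hdeg, hsupp⟩ := cycle4_fact (Fct i) (nf i) (hadjL i) (h4L i hi) (hne2L i hi) hcl
    exact ⟨⟨fun x y h => ⟨h.1, h.2.1, h.2.2.1⟩, hdeg⟩, hsupp⟩
  · -- partition of the edges
    intro e
    induction e using Sym2.ind with
    | _ x y =>
      intro he
      rw [SimpleGraph.mem_edgeSet] at he
      obtain ⟨h1, h2, h3⟩ : x ≠ y ∧ x⁻¹ * y ≠ QuaternionGroup.a 6 ∧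
          y⁻¹ * x ≠ QuaternionGroup.a 6 := he
      refine ⟨col x y, ?_, ?_⟩
      · show s(x, y) ∈ (Fct (col x y)).edgeSet
        rw [SimpleGraph.mem_edgeSet]
        exact ⟨h1, h2, h3, rfl⟩
      · intro j hj
        rw [SimpleGraph.mem_edgeSet] at hj
        exact hj.2.2.2.symm
  · -- sharp vertex-transitivity
    intro g
    refine ⟨⟨σf g, σf g⁻¹, σf_inv g, fun c => by have h := σf_inv g⁻¹ c; rwa [inv_inv] at h⟩, ?_⟩
    intro i
    show (Fct i).map (Equiv.mulLeft g).toEmbedding = Fct (σf g i)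
    ext v w
    simp only [SimpleGraph.map_adj, Equiv.coe_toEmbedding, Equiv.coe_mulLeft]
    constructor
    · rintro ⟨-, p, q, hpq, rfl, rfl⟩
      show fadj (σf g i) (g * p) (g * q)
      refine ⟨fun h => hpq.1 (mul_left_cancel h), ?_, ?_, ?_⟩
      · rw [mul_inv_rev, mul_assoc, inv_mul_cancel_left]; exact hpq.2.1
      · rw [mul_inv_rev, mul_assoc, inv_mul_cancel_left]; exact hpq.2.2.1
      · rw [col_mul g p q hpq.1 hpq.2.1, hpq.2.2.2]
    · intro h
      refine ⟨h.1, g⁻¹ * v, g⁻¹ * w, ⟨?_, ?_, ?_, ?_⟩, mul_inv_cancel_left g v, mul_inv_cancel_left g w⟩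
      · exact fun hh => h.1 (mul_left_cancel hh)
      · rw [mul_inv_rev, inv_inv, mul_assoc, mul_inv_cancel_left]; exact h.2.1
      · rw [mul_inv_rev, inv_inv, mul_assoc, mul_inv_cancel_left]; exact h.2.2.1
      · have hc := col_mul g⁻¹ v w h.1 h.2.1
        rw [hc, h.2.2.2, σf_inv]
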